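/- Let G be a group, ψ : G → ℤ a group homomorphism, and K = ker ψ. If x, y, z ∈ G satisfy ψ(x) = ψ(y) = ψ(z) = 1, then the triple product of commutators ⁅x,y⁆·⁅y,z⁆·⁅z,x⁆ lies in ⁅K,K⁆. -/

import Mathlib

open scoped commutatorElement

/-- Auxiliary pure group-theoretic identity: if the `B`-conjugates of `A*B⁻¹` and `C*B⁻¹`
commute, then `⁅A,B⁆ * ⁅B,C⁆ * ⁅C,A⁆ = 1`. -/
lemma aux_triple_comm {H : Type*} [Group H] (A B C : H)
    (h : (B * (A * B⁻¹) * B⁻¹) * (B * (C * B⁻¹) * B⁻¹)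
        = (B * (C * B⁻¹) * B⁻¹) * (B * (A * B⁻¹) * B⁻¹)) :
    ⁅A, B⁆ * ⁅B, C⁆ * ⁅C, A⁆ = 1 := by
  have e : ⁅A, B⁆ * ⁅B, C⁆ * ⁅C, A⁆
      = (A * B⁻¹) * (B * (A * B⁻¹) * B⁻¹)⁻¹ *
        ((B * (C * B⁻¹) * B⁻¹) * (B * (A * B⁻¹) * B⁻¹)) *
        (B * (C * B⁻¹) * B⁻¹)⁻¹ * (A * B⁻¹)⁻¹ := by
    simp only [commutatorElement_def]
    group
  rw [e, ← h]
  group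

/-- Let `G` be a group, `ψ : G → ℤ` a group homomorphism (with `ℤ` viewed
multiplicatively as `Multiplicative ℤ`), and `K = ker ψ`. If `x, y, z ∈ G` satisfy
`ψ x = ψ y = ψ z = 1`, then `⁅x,y⁆ ⁅y,z⁆ ⁅z,x⁆ ∈ ⁅K, K⁆`. -/
theorem triple_commutator_product_mem_commutator_ker
    {G : Type*} [Group G] (ψ : G →* Multiplicative ℤ) (x y z : G)
    (hx : ψ x = Multiplicative.ofAdd 1)
    (hy : ψ y = Multiplicative.ofAdd 1)
    (hz : ψ z = Multiplicative.ofAdd 1) :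
    ⁅x, y⁆ * ⁅y, z⁆ * ⁅z, x⁆ ∈ ⁅ψ.ker, ψ.ker⁆ := by
  set N : Subgroup G := ⁅ψ.ker, ψ.ker⁆ with hN
  have hnorm : N.Normal := Subgroup.commutator_normal _ _
  rw [← QuotientGroup.eq_one_iff]
  set π : G →* G ⧸ N := QuotientGroup.mk' N with hπ
  -- images of kernel elements commute in the quotient
  have key : ∀ u v : G, u ∈ ψ.ker → v ∈ ψ.ker → π u * π v = π v * π u := by
    intro u v hu hv
    have hmem : ⁅u, v⁆ ∈ N := Subgroup.commutator_mem_commutator hu hv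
    have h1 : π ⁅u, v⁆ = 1 := (QuotientGroup.eq_one_iff _).2 hmem
    rw [map_commutatorElement] at h1
    exact commutatorElement_eq_one_iff_mul_comm.mp h1
  have hxy : x * y⁻¹ ∈ ψ.ker := by
    simp [MonoidHom.mem_ker, hx, hy]
  have hzy : z * y⁻¹ ∈ ψ.ker := by
    simp [MonoidHom.mem_ker, hz, hy]
  have hp : y * (x * y⁻¹) * y⁻¹ ∈ ψ.ker := by
    simp [MonoidHom.mem_ker, hx, hy, mul_assoc]
  have hq : y * (z * y⁻¹) * y⁻¹ ∈ ψ.ker := by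
    simp [MonoidHom.mem_ker, hz, hy, mul_assoc]
  have hcomm := key _ _ hp hq
  simp only [map_mul, map_inv] at hcomm
  have := aux_triple_comm (π x) (π y) (π z) hcomm
  show π (⁅x, y⁆ * ⁅y, z⁆ * ⁅z, x⁆) = 1
  simpa [map_mul, map_commutatorElement] using this
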